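/- Let {Q(k)} be a process whose increments are uniformly bounded by M and satisfy E[Q(k+1) - Q(k) | F_k] = -1 for all k (where F_k is the natural filtration). Define h(z;α) = log E_z exp(α(Q(1)-Q(0))), H(α) = sup_z h(z;α), and L(β) = sup_α [αβ - H(α)]. Then H is convex, Lipschitz with constant M, H(0) = 0, H is differentiable at 0 with H'(0) = -1, L is convex and nonnegative, and L(β) = 0 if and only if β = -1. -/

import Mathlib

open MeasureTheory Real

section Helpers
variable {Ω : Type*} [MeasurableSpace Ω] {μ : Measure Ω} [IsProbabilityMeasure μ]
  {X : Ω → ℝ} {M : ℝ}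

lemma aux_absle (hXb : ∀ ω, |X ω| ≤ M) (α : ℝ) (ω : Ω) : |α * X ω| ≤ |α| * M := by
  rw [abs_mul]
  exact mul_le_mul_of_nonneg_left (hXb ω) (abs_nonneg α)

lemma aux_intX (hXm : Measurable X) (hXb : ∀ ω, |X ω| ≤ M) : Integrable X μ := by
  refine Integrable.mono' (integrable_const M) hXm.aestronglyMeasurable ?_
  filter_upwards with ω using by simpa using hXb ω

lemma aux_int (hXm : Measurable X) (hXb : ∀ ω, |X ω| ≤ M) (α : ℝ) :
    Integrable (fun ω => exp (α * X ω)) μ := by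
  refine Integrable.mono' (integrable_const (exp (|α| * M)))
    ((hXm.const_mul α).exp.aestronglyMeasurable) ?_
  filter_upwards with ω
  rw [norm_of_nonneg (exp_nonneg _), exp_le_exp]
  exact (le_abs_self _).trans (aux_absle hXb α ω)

lemma aux_lb (hXm : Measurable X) (hXb : ∀ ω, |X ω| ≤ M) (α : ℝ) :
    exp (-(|α| * M)) ≤ ∫ ω, exp (α * X ω) ∂μ := by
  have := integral_mono (μ := μ) (integrable_const (exp (-(|α| * M)))) (aux_int hXm hXb α)
    (fun ω => by
      rw [exp_le_exp]
      exact neg_le_of_abs_le (aux_absle hXb α ω) |>.trans (le_refl _) |> (fun h => h))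
  simpa using this

lemma aux_pos (hXm : Measurable X) (hXb : ∀ ω, |X ω| ≤ M) (α : ℝ) :
    0 < ∫ ω, exp (α * X ω) ∂μ :=
  lt_of_lt_of_le (exp_pos _) (aux_lb hXm hXb α)

lemma aux_ub (hXm : Measurable X) (hXb : ∀ ω, |X ω| ≤ M) (α : ℝ) :
    Real.log (∫ ω, exp (α * X ω) ∂μ) ≤ |α| * M := by
  rw [Real.log_le_iff_le_exp (aux_pos hXm hXb α)]
  have := integral_mono (μ := μ) (aux_int hXm hXb α) (integrable_const (exp (|α| * M)))
    (fun ω => by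
      rw [exp_le_exp]
      exact (le_abs_self _).trans (aux_absle hXb α ω))
  simpa using this

lemma aux_jensen (hXm : Measurable X) (hXb : ∀ ω, |X ω| ≤ M)
    (hint : ∫ ω, X ω ∂μ = -1) (α : ℝ) :
    -α ≤ Real.log (∫ ω, exp (α * X ω) ∂μ) := by
  rw [Real.le_log_iff_exp_le (aux_pos hXm hXb α)]
  have j := convexOn_exp.map_integral_le (μ := μ) (f := fun ω => α * X ω)
    continuous_exp.continuousOn isClosed_univ
    (Filter.Eventually.of_forall (fun _ => Set.mem_univ _))
    ((aux_intX hXm hXb).const_mul α) ?_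
  · rw [integral_const_mul α (fun ω => X ω), hint] at j
    simpa [mul_comm] using j
  · exact aux_int hXm hXb α

lemma aux_lip (hXm : Measurable X) (hXb : ∀ ω, |X ω| ≤ M) (α β : ℝ) :
    Real.log (∫ ω, exp (α * X ω) ∂μ) ≤ Real.log (∫ ω, exp (β * X ω) ∂μ) + M * |α - β| := by
  have hpt : ∀ ω, exp (α * X ω) ≤ exp (|α - β| * M) * exp (β * X ω) := by
    intro ω
    rw [← Real.exp_add, exp_le_exp]
    have : α * X ω - β * X ω ≤ |α - β| * M := by
      have := aux_absle hXb (α - β) ω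
      rw [sub_mul] at this
      exact (le_abs_self _).trans this
    linarith
  have h1 : (∫ ω, exp (α * X ω) ∂μ) ≤ exp (|α - β| * M) * ∫ ω, exp (β * X ω) ∂μ := by
    rw [← integral_const_mul (rexp (|α - β| * M)) (fun ω => rexp (β * X ω))]
    exact integral_mono (aux_int hXm hXb α) ((aux_int hXm hXb β).const_mul _) hpt
  calc Real.log (∫ ω, exp (α * X ω) ∂μ) ≤ Real.log (exp (|α - β| * M) * ∫ ω, exp (β * X ω) ∂μ) := by
        exact Real.log_le_log (aux_pos hXm hXb α) h1
    _ = Real.log (∫ ω, exp (β * X ω) ∂μ) + M * |α - β| := by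
        rw [Real.log_mul (exp_ne_zero _) (ne_of_gt (aux_pos hXm hXb β)), Real.log_exp]
        ring

end Helpers

section Helpers2
variable {Ω : Type*} [MeasurableSpace Ω] {μ : Measure Ω} [IsProbabilityMeasure μ]
  {X : Ω → ℝ} {M : ℝ}

lemma aux_holder (hXm : Measurable X) (hXb : ∀ ω, |X ω| ≤ M)
    {x y a b : ℝ} (ha : 0 < a) (hb : 0 < b) (hab : a + b = 1)
    (hInt : ∀ α, Integrable (fun ω => exp (α * X ω)) μ) :
    (∫ ω, exp ((a * x + b * y) * X ω) ∂μ) ≤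
      (∫ ω, exp (x * X ω) ∂μ) ^ a * (∫ ω, exp (y * X ω) ∂μ) ^ b := by
  have ha1 : a < 1 := by linarith
  have hpq : (a⁻¹).HolderConjugate b⁻¹ := by
    rw [Real.holderConjugate_iff]; constructor
    · exact (one_lt_inv_iff₀).2 ⟨ha, ha1⟩
    · simp only [one_div, inv_inv]; exact hab
  set f : Ω → ENNReal := fun ω => ENNReal.ofReal (exp (x * X ω)) ^ (a : ℝ) with hf
  set g : Ω → ENNReal := fun ω => ENNReal.ofReal (exp (y * X ω)) ^ (b : ℝ) with hg
  have hfm : AEMeasurable f μ :=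
    (((hXm.const_mul x).exp.ennreal_ofReal).pow_const _).aemeasurable
  have hgm : AEMeasurable g μ :=
    (((hXm.const_mul y).exp.ennreal_ofReal).pow_const _).aemeasurable
  have key := ENNReal.lintegral_mul_le_Lp_mul_Lq μ hpq hfm hgm
  have hL : ∀ α : ℝ, ∫⁻ ω, ENNReal.ofReal (exp (α * X ω)) ∂μ
      = ENNReal.ofReal (∫ ω, exp (α * X ω) ∂μ) := by
    intro α
    rw [ofReal_integral_eq_lintegral_ofReal (hInt α)
      (Filter.Eventually.of_forall fun ω => exp_nonneg _)]
  -- LHS rewrite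
  have hlhs : ∀ ω, (f * g) ω = ENNReal.ofReal (exp ((a * x + b * y) * X ω)) := by
    intro ω
    simp only [hf, hg, Pi.mul_apply]
    rw [ENNReal.ofReal_rpow_of_pos (exp_pos _), ENNReal.ofReal_rpow_of_pos (exp_pos _),
      ← ENNReal.ofReal_mul (by positivity)]
    congr 1
    rw [← Real.exp_mul, ← Real.exp_mul, ← Real.exp_add]
    ring_nf
  have hfp : ∀ ω, f ω ^ (a⁻¹ : ℝ) = ENNReal.ofReal (exp (x * X ω)) := by
    intro ω
    rw [hf, ← ENNReal.rpow_mul, mul_inv_cancel₀ (ne_of_gt ha), ENNReal.rpow_one]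
  have hgp : ∀ ω, g ω ^ (b⁻¹ : ℝ) = ENNReal.ofReal (exp (y * X ω)) := by
    intro ω
    rw [hg, ← ENNReal.rpow_mul, mul_inv_cancel₀ (ne_of_gt hb), ENNReal.rpow_one]
  simp only [hlhs] at key
  rw [lintegral_congr hfp, lintegral_congr hgp, hL, hL, hL] at key
  rw [one_div, inv_inv, one_div, inv_inv] at key
  rw [ENNReal.ofReal_rpow_of_pos, ENNReal.ofReal_rpow_of_pos,
    ← ENNReal.ofReal_mul (by positivity)] at key
  · exact (ENNReal.ofReal_le_ofReal_iff (by positivity)).1 key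
  · exact aux_pos hXm hXb y
  · exact aux_pos hXm hXb x

lemma aux_cvx (hXm : Measurable X) (hXb : ∀ ω, |X ω| ≤ M) :
    ConvexOn ℝ Set.univ (fun α => Real.log (∫ ω, exp (α * X ω) ∂μ)) := by
  refine ⟨convex_univ, ?_⟩
  intro x _ y _ a b ha hb hab
  rcases eq_or_lt_of_le ha with ha0 | ha
  · simp only [← ha0, zero_smul, zero_mul, zero_add, smul_eq_mul]
    have hb1 : b = 1 := by linarith
    simp [hb1]
  rcases eq_or_lt_of_le hb with hb0 | hb
  · simp only [← hb0, zero_smul, zero_mul, add_zero, smul_eq_mul]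
    have ha1 : a = 1 := by linarith
    simp [ha1]
  have h := aux_holder (x := x) (y := y) hXm hXb ha hb hab (aux_int (μ := μ) hXm hXb)
  simp only [smul_eq_mul]
  show Real.log (∫ ω, exp ((a * x + b * y) * X ω) ∂μ) ≤
    a * Real.log (∫ ω, exp (x * X ω) ∂μ) + b * Real.log (∫ ω, exp (y * X ω) ∂μ)
  calc Real.log (∫ ω, exp ((a * x + b * y) * X ω) ∂μ)
      ≤ Real.log ((∫ ω, exp (x * X ω) ∂μ) ^ a * (∫ ω, exp (y * X ω) ∂μ) ^ b) :=
        Real.log_le_log (aux_pos hXm hXb _) h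
    _ = a * Real.log (∫ ω, exp (x * X ω) ∂μ) + b * Real.log (∫ ω, exp (y * X ω) ∂μ) := by
        rw [Real.log_mul (ne_of_gt (Real.rpow_pos_of_pos (aux_pos hXm hXb x) a))
          (ne_of_gt (Real.rpow_pos_of_pos (aux_pos hXm hXb y) b)),
          Real.log_rpow (aux_pos hXm hXb x), Real.log_rpow (aux_pos hXm hXb y)]

lemma aux_sq (hXm : Measurable X) (hXb : ∀ ω, |X ω| ≤ M) :
    Integrable (fun ω => (X ω) ^ 2) μ := by
  refine Integrable.mono' (integrable_const (M ^ 2)) (hXm.pow_const 2).aestronglyMeasurable ?_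
  filter_upwards with ω
  rw [norm_of_nonneg (sq_nonneg _)]
  exact sq_le_sq' (neg_le_of_abs_le (hXb ω)) (le_of_abs_le (hXb ω))

lemma aux_quad (hXm : Measurable X) (hXb : ∀ ω, |X ω| ≤ M)
    (hint : ∫ ω, X ω ∂μ = -1) {α : ℝ} (hα : |α| * M ≤ 1) :
    Real.log (∫ ω, exp (α * X ω) ∂μ) ≤ -α + 3 / 4 * (M ^ 2 * α ^ 2) := by
  have hpt : ∀ ω, exp (α * X ω) ≤ 1 + α * X ω + 3 / 4 * (α * X ω) ^ 2 := by
    intro ω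
    have habs : |α * X ω| ≤ 1 := (aux_absle hXb α ω).trans hα
    have hb2 := Real.exp_bound habs (n := 2) (by norm_num)
    have hsum : ∑ m ∈ Finset.range 2, (α * X ω) ^ m / (m.factorial : ℝ) = 1 + α * X ω := by
      simp [Finset.sum_range_succ]
    rw [hsum] at hb2
    have h2 := (abs_le.1 hb2).2
    have h3 : |α * X ω| ^ 2 = (α * X ω) ^ 2 := sq_abs _
    norm_num [Nat.factorial] at h2
    nlinarith [sq_abs (α * X ω), show (|α| * |X ω|) ^ 2 = (α * X ω) ^ 2 by rw [← abs_mul, sq_abs]]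
  have i2 : Integrable (fun ω => α * X ω) μ := (aux_intX hXm hXb).const_mul α
  have i3 : Integrable (fun ω => 3 / 4 * (α * X ω) ^ 2) μ := by
    refine ((aux_sq hXm hXb).const_mul (3 / 4 * α ^ 2)).congr ?_
    filter_upwards with ω
    ring
  have i12 : Integrable (fun ω => 1 + α * X ω) μ := (integrable_const 1).add i2
  have hXsq : Integrable (fun ω => 1 + α * X ω + 3 / 4 * (α * X ω) ^ 2) μ := i12.add i3
  have hIsq : ∫ ω, (X ω) ^ 2 ∂μ ≤ M ^ 2 := by
    have := integral_mono (aux_sq (μ := μ) hXm hXb) (integrable_const (M ^ 2)) (fun ω =>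
      sq_le_sq' (neg_le_of_abs_le (hXb ω)) (le_of_abs_le (hXb ω)))
    simpa using this
  have hInt : ∫ ω, exp (α * X ω) ∂μ ≤ 1 - α + 3 / 4 * (M ^ 2 * α ^ 2) := by
    have h1 := integral_mono (aux_int hXm hXb α) hXsq hpt
    have h2 : ∫ ω, (1 + α * X ω + 3 / 4 * (α * X ω) ^ 2) ∂μ
        = 1 + α * (∫ ω, X ω ∂μ) + 3 / 4 * α ^ 2 * ∫ ω, (X ω) ^ 2 ∂μ := by
      rw [integral_add i12 i3, integral_add (integrable_const 1) i2]
      simp only [integral_const, measure_univ, probReal_univ, ENNReal.toReal_one, smul_eq_mul, one_mul]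
      rw [integral_const_mul α X]
      congr 1
      rw [show (fun ω => 3 / 4 * (α * X ω) ^ 2) = fun ω => (3 / 4 * α ^ 2) * (X ω) ^ 2 by
        funext ω; ring, integral_const_mul]
    rw [h2, hint] at h1
    nlinarith [hIsq, sq_nonneg α]
  calc Real.log (∫ ω, exp (α * X ω) ∂μ) ≤ (∫ ω, exp (α * X ω) ∂μ) - 1 :=
        Real.log_le_sub_one_of_pos (aux_pos hXm hXb α)
    _ ≤ -α + 3 / 4 * (M ^ 2 * α ^ 2) := by linarith

end Helpers2
open MeasureTheory ProbabilityTheory Real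

/-- Properties of the log-moment generating function `H` and its Legendre
transform `L` for a process `Q` with increments uniformly bounded by `M`
and conditional drift `-1`: `H` is convex, `M`-Lipschitz, `H(0) = 0`,
`H'(0) = -1`; `L` is convex, nonnegative, and `L(β) = 0 ↔ β = -1`. -/
theorem stmt16 {Ω : Type*} [mΩ : MeasurableSpace Ω]
    {Z : Type*} [Countable Z] [Nonempty Z]
    (P : Z → Measure Ω) (hP : ∀ z, IsProbabilityMeasure (P z))
    (F : Filtration ℕ mΩ) (Q : ℕ → Ω → ℝ)
    (hadapted : ∀ k, Measurable[F k] (Q k))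
    (M : ℝ) (hM : 0 < M)
    (hbdd : ∀ k ω, |Q (k + 1) ω - Q k ω| ≤ M)
    (hdrift : ∀ z k,
      (P z)[fun ω => Q (k + 1) ω - Q k ω|F k] =ᵐ[P z] fun _ => (-1 : ℝ))
    (h : Z → ℝ → ℝ)
    (hh : ∀ z α, h z α = Real.log (∫ ω, Real.exp (α * (Q 1 ω - Q 0 ω)) ∂(P z)))
    (H : ℝ → ℝ) (hHdef : ∀ α, H α = ⨆ z, h z α)
    (L : ℝ → EReal)
    (hLdef : ∀ β, L β = ⨆ α : ℝ, ((α * β - H α : ℝ) : EReal)) :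
    ConvexOn ℝ Set.univ H ∧
    LipschitzWith M.toNNReal H ∧
    H 0 = 0 ∧
    HasDerivAt H (-1) 0 ∧
    (∀ x y a b : ℝ, 0 ≤ a → 0 ≤ b → a + b = 1 →
      L (a * x + b * y) ≤ (a : EReal) * L x + (b : EReal) * L y) ∧
    (∀ β, 0 ≤ L β) ∧
    (∀ β, L β = 0 ↔ β = -1) := by
  have hXm : Measurable (fun ω => Q 1 ω - Q 0 ω) :=
    ((hadapted 1).mono (F.le 1) le_rfl).sub ((hadapted 0).mono (F.le 0) le_rfl)
  have hXb : ∀ ω, |Q 1 ω - Q 0 ω| ≤ M := hbdd 0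
  -- the mean of the increment is `-1`
  have hdint : ∀ z, ∫ ω, (Q 1 ω - Q 0 ω) ∂(P z) = -1 := by
    intro z
    haveI := hP z
    have h0 := hdrift z 0
    have e1 : ∫ ω, ((P z)[fun ω => Q (0 + 1) ω - Q 0 ω|F 0]) ω ∂(P z)
        = ∫ ω, (Q (0 + 1) ω - Q 0 ω) ∂(P z) := integral_condExp (F.le 0)
    rw [integral_congr_ae h0] at e1
    simpa using e1.symm
  -- basic bounds for h
  have hub : ∀ z α, h z α ≤ |α| * M := by
    intro z α
    haveI := hP z
    rw [hh]
    exact aux_ub hXm hXb α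
  have hlbz : ∀ z α, -α ≤ h z α := by
    intro z α
    haveI := hP z
    rw [hh]
    exact aux_jensen hXm hXb (hdint z) α
  have hbdda : ∀ α, BddAbove (Set.range fun z => h z α) := by
    intro α
    refine ⟨|α| * M, ?_⟩
    rintro _ ⟨z, rfl⟩
    exact hub z α
  have hhH : ∀ z α, h z α ≤ H α := by
    intro z α
    rw [hHdef]
    exact le_ciSup (hbdda α) z
  have hHlb : ∀ α, -α ≤ H α := fun α =>
    (hlbz (Classical.arbitrary Z) α).trans (hhH _ α)
  have hH0 : H 0 = 0 := by
    have h0 : ∀ z, h z 0 = 0 := by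
      intro z
      haveI := hP z
      rw [hh]
      simp
    rw [hHdef]
    simp only [h0]
    exact ciSup_const
  have hHquad : ∀ α : ℝ, |α| * M ≤ 1 → H α ≤ -α + 3 / 4 * (M ^ 2 * α ^ 2) := by
    intro α hα
    rw [hHdef]
    refine ciSup_le fun z => ?_
    haveI := hP z
    rw [hh]
    exact aux_quad hXm hXb (hdint z) hα
  -- Lipschitz key
  have hlipkey : ∀ α β : ℝ, H α ≤ H β + M * |α - β| := by
    intro α β
    rw [hHdef α]
    refine ciSup_le fun z => ?_
    haveI := hP z
    have := aux_lip (μ := P z) hXm hXb α β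
    rw [← hh z α, ← hh z β] at this
    exact this.trans (by linarith [hhH z β])
  refine ⟨?_, ?_, hH0, ?_, ?_, ?_, ?_⟩
  -- 1. convexity of H
  · refine ⟨convex_univ, ?_⟩
    intro x _ y _ a b ha hb hab
    have hcz : ∀ z, ConvexOn ℝ Set.univ (h z) := by
      intro z
      haveI := hP z
      rw [show h z = fun α => Real.log (∫ ω, Real.exp (α * (Q 1 ω - Q 0 ω)) ∂(P z)) from
        funext (hh z)]
      exact aux_cvx hXm hXb
    rw [hHdef (a • x + b • y)]
    refine ciSup_le fun z => ?_
    refine ((hcz z).2 (Set.mem_univ x) (Set.mem_univ y) ha hb hab).trans ?_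
    exact add_le_add (smul_le_smul_of_nonneg_left (hhH z x) ha)
      (smul_le_smul_of_nonneg_left (hhH z y) hb)
  -- 2. Lipschitz
  · rw [lipschitzWith_iff_dist_le_mul]
    intro α β
    rw [Real.dist_eq, Real.dist_eq, Real.coe_toNNReal M hM.le]
    rw [abs_sub_le_iff]
    constructor
    · linarith [hlipkey α β]
    · rw [abs_sub_comm]
      linarith [hlipkey β α]
  -- 4. derivative at 0
  · rw [hasDerivAt_iff_isLittleO]
    rw [Asymptotics.isLittleO_iff]
    intro c hc
    have hC : (0:ℝ) < 3 / 4 * M ^ 2 := by positivity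
    have hδ : (0:ℝ) < min (1 / M) (c / (3 / 4 * M ^ 2)) :=
      lt_min (by positivity) (by positivity)
    refine Filter.eventually_of_mem (Metric.ball_mem_nhds (0:ℝ) hδ) fun x hx => ?_
    rw [Metric.mem_ball, Real.dist_eq, sub_zero] at hx
    have hx1 : |x| ≤ 1 / M := le_of_lt (lt_of_lt_of_le hx (min_le_left _ _))
    have hx2 : |x| ≤ c / (3 / 4 * M ^ 2) := le_of_lt (lt_of_lt_of_le hx (min_le_right _ _))
    have hxM : |x| * M ≤ 1 := by
      calc |x| * M ≤ (1 / M) * M := mul_le_mul_of_nonneg_right hx1 hM.le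
        _ = 1 := by field_simp
    have hq := hHquad x hxM
    have hl := hHlb x
    have habs : |H x + x| ≤ 3 / 4 * M ^ 2 * x ^ 2 := by
      rw [abs_le]
      constructor
      · nlinarith [sq_nonneg x]
      · nlinarith
    simp only [sub_zero, smul_eq_mul, mul_neg_one, sub_neg_eq_add, hH0, Real.norm_eq_abs,
      zero_add]
    calc |H x + x| ≤ 3 / 4 * M ^ 2 * x ^ 2 := habs
      _ = (3 / 4 * M ^ 2 * |x|) * |x| := by rw [← sq_abs x]; ring
      _ ≤ c * |x| := by
          refine mul_le_mul_of_nonneg_right ?_ (abs_nonneg x)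
          calc 3 / 4 * M ^ 2 * |x| ≤ 3 / 4 * M ^ 2 * (c / (3 / 4 * M ^ 2)) :=
                mul_le_mul_of_nonneg_left hx2 hC.le
            _ = c := by field_simp
  -- 5. convexity inequality for L
  · intro x y a b ha hb hab
    rw [hLdef]
    refine iSup_le fun α => ?_
    have e1 : (α * (a * x + b * y) - H α : ℝ)
        = a * (α * x - H α) + b * (α * y - H α) := by linear_combination H α * hab
    rw [e1, EReal.coe_add, EReal.coe_mul, EReal.coe_mul]
    refine add_le_add ?_ ?_
    · refine mul_le_mul_of_nonneg_left ?_ (by exact_mod_cast ha)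
      rw [hLdef]
      exact le_iSup (fun α : ℝ => ((α * x - H α : ℝ) : EReal)) α
    · refine mul_le_mul_of_nonneg_left ?_ (by exact_mod_cast hb)
      rw [hLdef]
      exact le_iSup (fun α : ℝ => ((α * y - H α : ℝ) : EReal)) α
  -- 6. nonnegativity of L
  · intro β
    rw [hLdef]
    calc (0:EReal) = ((0 * β - H 0 : ℝ) : EReal) := by rw [hH0]; norm_num
      _ ≤ ⨆ α : ℝ, ((α * β - H α : ℝ) : EReal) :=
        le_iSup (fun α : ℝ => ((α * β - H α : ℝ) : EReal)) 0
  -- 7. L β = 0 ↔ β = -1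
  · have hLnonneg : ∀ β, (0:EReal) ≤ L β := by
      intro β
      rw [hLdef]
      calc (0:EReal) = ((0 * β - H 0 : ℝ) : EReal) := by rw [hH0]; norm_num
        _ ≤ ⨆ α : ℝ, ((α * β - H α : ℝ) : EReal) :=
          le_iSup (fun α : ℝ => ((α * β - H α : ℝ) : EReal)) 0
    intro β
    constructor
    · intro hL0
      by_contra hβ
      have hβ1 : β + 1 ≠ 0 := fun hc => hβ (by linarith)
      have habs1 : 0 < |β + 1| := abs_pos.2 hβ1
      have hC : (0:ℝ) < 3 / 4 * M ^ 2 := by positivity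
      set C : ℝ := 3 / 4 * M ^ 2 with hCdef
      set ε : ℝ := min (1 / M) (|β + 1| / (2 * C)) with hεdef
      have hεpos : 0 < ε := lt_min (by positivity) (by positivity)
      set s : ℝ := if 0 ≤ β + 1 then 1 else -1 with hsdef
      have hsb : s * (β + 1) = |β + 1| := by
        by_cases h' : 0 ≤ β + 1
        · simp [hsdef, h', abs_of_nonneg h']
        · push_neg at h'
          simp [hsdef, not_le.2 h', abs_of_neg h']
      have hs2 : s ^ 2 = 1 := by
        by_cases h' : 0 ≤ β + 1 <;> simp [hsdef, h'] <;> norm_num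
      set α₀ : ℝ := s * ε with hα₀def
      have hsabs : |α₀| = ε := by
        rw [hα₀def, abs_mul]
        have : |s| = 1 := by
          by_cases h' : 0 ≤ β + 1 <;> simp [hsdef, h']
        rw [this, one_mul, abs_of_pos hεpos]
      have hα₀M : |α₀| * M ≤ 1 := by
        rw [hsabs]
        calc ε * M ≤ (1 / M) * M := mul_le_mul_of_nonneg_right (min_le_left _ _) hM.le
          _ = 1 := by field_simp
      have hq := hHquad α₀ hα₀M
      have h1 : α₀ * (β + 1) = ε * |β + 1| := by
        calc α₀ * (β + 1) = ε * (s * (β + 1)) := by rw [hα₀def]; ring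
          _ = ε * |β + 1| := by rw [hsb]
      have h2 : α₀ ^ 2 = ε ^ 2 := by
        rw [hα₀def]
        calc (s * ε) ^ 2 = s ^ 2 * ε ^ 2 := by ring
          _ = ε ^ 2 := by rw [hs2, one_mul]
      have hεle : ε ≤ |β + 1| / (2 * C) := min_le_right _ _
      have h3 : C * ε ^ 2 ≤ ε * |β + 1| / 2 := by
        have : ε * ε ≤ ε * (|β + 1| / (2 * C)) :=
          mul_le_mul_of_nonneg_left hεle hεpos.le
        calc C * ε ^ 2 = C * (ε * ε) := by ring
          _ ≤ C * (ε * (|β + 1| / (2 * C))) := mul_le_mul_of_nonneg_left this hC.le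
          _ = ε * |β + 1| / 2 := by field_simp
      have hval : 0 < α₀ * β - H α₀ := by
        have hq' : H α₀ ≤ -α₀ + C * α₀ ^ 2 := by
          rw [hCdef]
          calc H α₀ ≤ -α₀ + 3 / 4 * (M ^ 2 * α₀ ^ 2) := hq
            _ = -α₀ + 3 / 4 * M ^ 2 * α₀ ^ 2 := by ring
        have : α₀ * β - H α₀ ≥ α₀ * (β + 1) - C * α₀ ^ 2 := by linarith
        rw [h1, h2] at this
        nlinarith [mul_pos hεpos habs1]
      have hlt : (0:EReal) < ((α₀ * β - H α₀ : ℝ) : EReal) := by exact_mod_cast hval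
      have hle : ((α₀ * β - H α₀ : ℝ) : EReal) ≤ L β := by
        rw [hLdef]
        exact le_iSup (fun α : ℝ => ((α * β - H α : ℝ) : EReal)) α₀
      rw [hL0] at hle
      exact absurd (lt_of_lt_of_le hlt hle) (lt_irrefl 0)
    · rintro rfl
      refine le_antisymm ?_ (hLnonneg (-1))
      rw [hLdef]
      refine iSup_le fun α => ?_
      have : (α * (-1) - H α : ℝ) ≤ 0 := by linarith [hHlb α]
      exact_mod_cast this
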